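/- Let R be a commutative ring, A = R[x,y], and m, N positive integers. The sequence 0 → A/(x^m) → A/(x^{m+N}) → A/(x^N) ⊕ A/(x^{m+N}, y^N) → A/(x^N, y^N) → 0 is exact, where the first map is multiplication by x^N y^N, the second map sends f to (f mod (x^N), f mod (x^{m+N}, y^N)), and the third map sends (f, g) to (f − g) mod (x^N, y^N). -/

import Mathlib

open MvPolynomial

variable (R : Type*) [CommRing R]

/-- `x` in `A = R[x,y]`. -/
noncomputable abbrev Xv : MvPolynomial (Fin 2) R := X 0
/-- `y` in `A = R[x,y]`. -/
noncomputable abbrev Yv : MvPolynomial (Fin 2) R := X 1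

/-- Multiplication by `x^N y^N`, as a map `A/(x^m) → A/(x^{m+N})`. -/
noncomputable def mulXYQ (m N : ℕ) :
    (MvPolynomial (Fin 2) R ⧸ Ideal.span {Xv R ^ m}) →ₗ[MvPolynomial (Fin 2) R]
      (MvPolynomial (Fin 2) R ⧸ Ideal.span {Xv R ^ (m + N)}) :=
  Submodule.mapQ _ _
    (LinearMap.toSpanSingleton (MvPolynomial (Fin 2) R) (MvPolynomial (Fin 2) R)
      (Xv R ^ N * Yv R ^ N))
    (by
      rw [Ideal.span_le]
      rintro z rfl
      simp only [Submodule.mem_comap, LinearMap.toSpanSingleton_apply, smul_eq_mul,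
        SetLike.mem_coe]
      exact Ideal.mem_span_singleton.mpr ⟨Yv R ^ N, by rw [pow_add]; ring⟩)

/-- The map `A/(x^{m+N}) → A/(x^N) ⊕ A/(x^{m+N}, y^N)` given by the two natural
quotient maps. -/
noncomputable def restrictPairQ (m N : ℕ) :
    (MvPolynomial (Fin 2) R ⧸ Ideal.span {Xv R ^ (m + N)}) →ₗ[MvPolynomial (Fin 2) R]
      (MvPolynomial (Fin 2) R ⧸ Ideal.span {Xv R ^ N}) ×
        (MvPolynomial (Fin 2) R ⧸ Ideal.span {Xv R ^ (m + N), Yv R ^ N}) :=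
  LinearMap.prod
    (Submodule.mapQ _ _ LinearMap.id
      (by
        rw [Submodule.comap_id, Ideal.span_le]
        rintro z rfl
        exact SetLike.mem_coe.mpr
          (Ideal.mem_span_singleton.mpr (pow_dvd_pow _ (Nat.le_add_left N m)))))
    (Submodule.mapQ _ _ LinearMap.id
      (by
        rw [Submodule.comap_id, Ideal.span_le]
        rintro z rfl
        exact Ideal.subset_span (by simp)))

/-- The difference map `A/(x^N) ⊕ A/(x^{m+N}, y^N) → A/(x^N, y^N)`, `(f, g) ↦ f - g`. -/
noncomputable def diffPairQ (m N : ℕ) :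
    ((MvPolynomial (Fin 2) R ⧸ Ideal.span {Xv R ^ N}) ×
        (MvPolynomial (Fin 2) R ⧸ Ideal.span {Xv R ^ (m + N), Yv R ^ N}))
      →ₗ[MvPolynomial (Fin 2) R]
      (MvPolynomial (Fin 2) R ⧸ Ideal.span {Xv R ^ N, Yv R ^ N}) :=
  (Submodule.mapQ _ _ LinearMap.id
      (by
        rw [Submodule.comap_id, Ideal.span_le]
        rintro z rfl
        exact Ideal.subset_span (by simp))).comp (LinearMap.fst _ _ _)
  - (Submodule.mapQ _ _ LinearMap.id
      (by
        rw [Submodule.comap_id, Ideal.span_le]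
        intro z hz
        simp only [Set.mem_insert_iff, Set.mem_singleton_iff] at hz
        rcases hz with rfl | rfl
        · refine SetLike.mem_coe.mpr ?_
          rw [pow_add]
          exact Ideal.mul_mem_left _ _ (Ideal.subset_span (by simp))
        · exact Ideal.subset_span (by simp))).comp (LinearMap.snd _ _ _)

section Aux

variable {R}

local notation "A" => MvPolynomial (Fin 2) R

lemma xy_pow_eq_monomial (a b : ℕ) :
    (X 0 : A) ^ a * X 1 ^ b
      = monomial (Finsupp.single 0 a + Finsupp.single 1 b) (1 : R) := by
  rw [X_pow_eq_monomial, X_pow_eq_monomial, monomial_mul, one_mul]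

lemma dd_le_iff {a b : ℕ} {d : Fin 2 →₀ ℕ} :
    Finsupp.single 0 a + Finsupp.single 1 b ≤ d ↔ a ≤ d 0 ∧ b ≤ d 1 := by
  rw [Finsupp.le_def]
  constructor
  · intro h
    exact ⟨by simpa [Finsupp.single_apply] using h 0,
      by simpa [Finsupp.single_apply] using h 1⟩
  · rintro ⟨h0, h1⟩ i
    fin_cases i
    · simpa [Finsupp.single_apply] using h0
    · simpa [Finsupp.single_apply] using h1

lemma coeff_eq_zero_of_mem_span_xy {a b : ℕ} {f : A}
    (hf : f ∈ Ideal.span {(X 0 : A) ^ a * X 1 ^ b})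
    {d : Fin 2 →₀ ℕ} (hd : d 0 < a ∨ d 1 < b) : coeff d f = 0 := by
  obtain ⟨g, rfl⟩ := Ideal.mem_span_singleton.mp hf
  rw [xy_pow_eq_monomial, coeff_monomial_mul', if_neg]
  rw [dd_le_iff]
  rintro ⟨h0, h1⟩
  rcases hd with h | h
  · exact absurd h0 (not_le.mpr h)
  · exact absurd h1 (not_le.mpr h)

lemma mem_span_xy_of_coeff {a b : ℕ} {f : A}
    (h : ∀ d : Fin 2 →₀ ℕ, d 0 < a ∨ d 1 < b → coeff d f = 0) :
    f ∈ Ideal.span {(X 0 : A) ^ a * X 1 ^ b} := by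
  classical
  set s : Fin 2 →₀ ℕ := Finsupp.single 0 a + Finsupp.single 1 b with hs
  refine Ideal.mem_span_singleton.mpr
    ⟨∑ d ∈ f.support, monomial (d - s) (coeff d f), ?_⟩
  rw [xy_pow_eq_monomial, ← hs, Finset.mul_sum]
  conv_lhs => rw [← support_sum_monomial_coeff f]
  refine Finset.sum_congr rfl fun d hd => ?_
  rw [monomial_mul, one_mul]
  congr 1
  have hsd : s ≤ d := by
    rw [hs, dd_le_iff]
    by_contra hc
    push_neg at hc
    rcases Nat.lt_or_ge (d 0) a with h0 | h0
    · exact MvPolynomial.mem_support_iff.mp hd (h d (Or.inl h0))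
    · exact MvPolynomial.mem_support_iff.mp hd (h d (Or.inr (hc h0)))
  rw [add_tsub_cancel_of_le hsd]

lemma coeff_eq_zero_of_mem_span_x {a : ℕ} {f : A}
    (hf : f ∈ Ideal.span {(X 0 : A) ^ a})
    {d : Fin 2 →₀ ℕ} (hd : d 0 < a) : coeff d f = 0 := by
  refine coeff_eq_zero_of_mem_span_xy (a := a) (b := 0) ?_ (Or.inl hd)
  rwa [pow_zero, mul_one]

lemma mem_span_x_of_coeff {a : ℕ} {f : A}
    (h : ∀ d : Fin 2 →₀ ℕ, d 0 < a → coeff d f = 0) :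
    f ∈ Ideal.span {(X 0 : A) ^ a} := by
  have := mem_span_xy_of_coeff (a := a) (b := 0) (f := f)
    (fun d hd => by rcases hd with h0 | h0; exacts [h d h0, absurd h0 (Nat.not_lt_zero _)])
  rwa [pow_zero, mul_one] at this

lemma coeff_eq_zero_of_mem_span_pair {a b : ℕ} {f : A}
    (hf : f ∈ Ideal.span {(X 0 : A) ^ a, (X 1 : A) ^ b})
    {d : Fin 2 →₀ ℕ} (h0 : d 0 < a) (h1 : d 1 < b) : coeff d f = 0 := by
  obtain ⟨p, q, rfl⟩ := Ideal.mem_span_pair.mp hf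
  rw [coeff_add, X_pow_eq_monomial, X_pow_eq_monomial, coeff_mul_monomial',
    coeff_mul_monomial', if_neg, if_neg, add_zero]
  · rw [Finsupp.single_le_iff]; exact not_le.mpr h1
  · rw [Finsupp.single_le_iff]; exact not_le.mpr h0

lemma reg_lemma (m N : ℕ) {w : A}
    (hw : w * ((X 0 : A) ^ N * X 1 ^ N) ∈ Ideal.span {(X 0 : A) ^ (m + N)}) :
    w ∈ Ideal.span {(X 0 : A) ^ m} := by
  apply mem_span_x_of_coeff
  intro d hd
  set s : Fin 2 →₀ ℕ := Finsupp.single 0 N + Finsupp.single 1 N with hs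
  have hs0 : s 0 = N := by simp [hs, Finsupp.single_apply]
  have h1 : (d + s) 0 < m + N := by
    rw [Finsupp.add_apply, hs0]; omega
  have h2 := coeff_eq_zero_of_mem_span_x hw h1
  rw [xy_pow_eq_monomial, ← hs, coeff_mul_monomial', if_pos, add_tsub_cancel_right,
    mul_one] at h2
  · exact h2
  · exact self_le_add_left _ _


lemma split_lemma (m N : ℕ) {f : A}
    (h1 : f ∈ Ideal.span {(X 0 : A) ^ N})
    (h2 : f ∈ Ideal.span {(X 0 : A) ^ (m + N), (X 1 : A) ^ N}) :
    ∃ g : A, f - (X 0 : A) ^ N * X 1 ^ N * g ∈ Ideal.span {(X 0 : A) ^ (m + N)} := by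
  classical
  set S : Finset (Fin 2 →₀ ℕ) := f.support.filter (fun d => N ≤ d 1) with hS
  set fhi : A := ∑ d ∈ S, monomial d (coeff d f) with hfhi
  have hcoeff : ∀ e : Fin 2 →₀ ℕ,
      coeff e fhi = if e ∈ S then coeff e f else 0 := by
    intro e
    rw [hfhi, coeff_sum]
    simp only [coeff_monomial]
    exact Finset.sum_ite_eq' S e (fun d => coeff d f)
  have hhi : fhi ∈ Ideal.span {(X 0 : A) ^ N * X 1 ^ N} := by
    apply mem_span_xy_of_coeff
    intro d hd
    rw [hcoeff]
    split_ifs with hmem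
    · rcases hd with h0 | h0
      · exact coeff_eq_zero_of_mem_span_x h1 h0
      · rw [hS, Finset.mem_filter] at hmem
        exact absurd hmem.2 (not_le.mpr h0)
    · rfl
  have hlo : f - fhi ∈ Ideal.span {(X 0 : A) ^ (m + N)} := by
    apply mem_span_x_of_coeff
    intro d hd
    rw [coeff_sub, hcoeff]
    split_ifs with hmem
    · exact sub_self _
    · rw [sub_zero]
      rw [hS, Finset.mem_filter, not_and_or] at hmem
      rcases hmem with hns | hlt
      · exact MvPolynomial.notMem_support_iff.mp hns
      · exact coeff_eq_zero_of_mem_span_pair h2 hd (not_le.mp hlt)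
  obtain ⟨g, hg⟩ := Ideal.mem_span_singleton.mp hhi
  exact ⟨g, by rw [← hg]; exact hlo⟩

end Aux

/-- The sequence
`0 → A/(x^m) → A/(x^{m+N}) → A/(x^N) ⊕ A/(x^{m+N}, y^N) → A/(x^N, y^N) → 0`
is exact, where `A = R[x,y]`, the first map is multiplication by `x^N y^N`, the second
is induced by the two natural quotient maps, and the third sends `(f, g) ↦ f - g`. -/
theorem toy_model_resolution_exact (m N : ℕ) (hm : 0 < m) (hN : 0 < N) :
    Function.Injective (mulXYQ R m N) ∧
    Function.Exact (mulXYQ R m N) (restrictPairQ R m N) ∧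
    Function.Exact (restrictPairQ R m N) (diffPairQ R m N) ∧
    Function.Surjective (diffPairQ R m N) := by
  refine ⟨?_, ?_, ?_, ?_⟩
  · -- injectivity of mulXYQ
    intro u v huv
    obtain ⟨a, rfl⟩ := Submodule.Quotient.mk_surjective _ u
    obtain ⟨b, rfl⟩ := Submodule.Quotient.mk_surjective _ v
    simp only [mulXYQ, Submodule.mapQ_apply] at huv
    rw [Submodule.Quotient.eq] at huv
    rw [Submodule.Quotient.eq]
    simp only [LinearMap.toSpanSingleton_apply, smul_eq_mul] at huv
    rw [← sub_mul] at huv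
    exact reg_lemma m N huv
  · -- exactness at A/(x^{m+N})
    intro y
    constructor
    · intro h
      obtain ⟨a, rfl⟩ := Submodule.Quotient.mk_surjective _ y
      simp only [restrictPairQ, LinearMap.prod_apply, Function.prod, Submodule.mapQ_apply,
        LinearMap.id_coe, id_eq, Prod.mk_eq_zero] at h
      obtain ⟨h1, h2⟩ := h
      rw [Submodule.Quotient.mk_eq_zero] at h1 h2
      obtain ⟨g, hg⟩ := split_lemma m N h1 h2
      refine ⟨Submodule.Quotient.mk g, ?_⟩
      simp only [mulXYQ, Submodule.mapQ_apply]
      rw [Submodule.Quotient.eq]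
      have he : g • (Xv R ^ N * Yv R ^ N) - a
          = -(a - (X 0 : MvPolynomial (Fin 2) R) ^ N * X 1 ^ N * g) := by
        rw [smul_eq_mul]; ring_nf
      rw [LinearMap.toSpanSingleton_apply, he]
      exact neg_mem hg
    · rintro ⟨u, rfl⟩
      obtain ⟨b, rfl⟩ := Submodule.Quotient.mk_surjective _ u
      simp only [mulXYQ, restrictPairQ, Submodule.mapQ_apply, LinearMap.prod_apply,
        Function.prod, LinearMap.id_coe, id_eq, LinearMap.toSpanSingleton_apply, smul_eq_mul,
        Prod.mk_eq_zero]
      constructor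
      · rw [Submodule.Quotient.mk_eq_zero]
        exact Ideal.mem_span_singleton.mpr ⟨Yv R ^ N * b, by ring⟩
      · rw [Submodule.Quotient.mk_eq_zero]
        exact Ideal.mem_span_pair.mpr ⟨0, b * Xv R ^ N, by ring⟩
  · -- exactness at the direct sum
    rintro ⟨u, v⟩
    constructor
    · intro h
      obtain ⟨a, rfl⟩ := Submodule.Quotient.mk_surjective _ u
      obtain ⟨b, rfl⟩ := Submodule.Quotient.mk_surjective _ v
      simp only [diffPairQ, LinearMap.sub_apply, LinearMap.comp_apply,
        LinearMap.fst_apply, LinearMap.snd_apply, Submodule.mapQ_apply,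
        LinearMap.id_coe, id_eq] at h
      rw [← Submodule.Quotient.mk_sub, Submodule.Quotient.mk_eq_zero] at h
      obtain ⟨p, q, hpq⟩ := Ideal.mem_span_pair.mp h
      refine ⟨Submodule.Quotient.mk (a - p * Xv R ^ N), ?_⟩
      simp only [restrictPairQ, LinearMap.prod_apply, Function.prod, Submodule.mapQ_apply,
        LinearMap.id_coe, id_eq, Prod.mk.injEq]
      constructor
      · rw [Submodule.Quotient.eq]
        have : a - p * Xv R ^ N - a = -p * Xv R ^ N := by ring
        rw [this]
        exact Ideal.mem_span_singleton.mpr ⟨-p, by ring⟩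
      · rw [Submodule.Quotient.eq]
        have : a - p * Xv R ^ N - b = q * Yv R ^ N := by linear_combination -hpq
        rw [this]
        exact Ideal.mem_span_pair.mpr ⟨0, q, by ring⟩
    · rintro ⟨w, hw⟩
      obtain ⟨c, rfl⟩ := Submodule.Quotient.mk_surjective _ w
      rw [← hw]
      simp only [restrictPairQ, diffPairQ, LinearMap.prod_apply, Function.prod,
        LinearMap.sub_apply, LinearMap.comp_apply, LinearMap.fst_apply,
        LinearMap.snd_apply, Submodule.mapQ_apply, LinearMap.id_coe, id_eq, sub_self]
  · -- surjectivity of diffPairQ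
    intro t
    obtain ⟨c, rfl⟩ := Submodule.Quotient.mk_surjective _ t
    refine ⟨(Submodule.Quotient.mk c, 0), ?_⟩
    simp only [diffPairQ, LinearMap.sub_apply, LinearMap.comp_apply,
      LinearMap.fst_apply, LinearMap.snd_apply, Submodule.mapQ_apply,
      LinearMap.id_coe, id_eq, map_zero, sub_zero]
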